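/- The set { α² | α ∈ [-1,1] } equals the interval [0,1]; the set { (1/4)·(3/2 + (1/2)·β₁ + 2·β₂) | β₁, β₂ ∈ [-1,1] } equals the interval [-1/4, 1]; and [0,1] is a strict subset of [-1/4, 1]. In particular, the zonotope overapproximation of the polynomial zonotope { α² | α ∈ [-1,1] } equals [0,1], while the union of the zonotope overapproximations of the two polynomial zonotopes obtained by splitting it equals [-1/4, 1], so the overapproximation error strictly increases after splitting. -/
import Mathlib


/-- The polynomial zonotope `{ α² | α ∈ [-1,1] }` equals `[0,1]` (which is also its
zonotope overapproximation), the union of the zonotope overapproximations of its two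
split pieces is `{ (1/4)(3/2 + (1/2)β₁ + 2β₂) | β₁, β₂ ∈ [-1,1] } = [-1/4, 1]`, and
`[0,1] ⊂ [-1/4,1]`: the overapproximation error strictly increases after splitting. -/
theorem split_overapproximation_increases :
    { y : ℝ | ∃ α ∈ Set.Icc (-1 : ℝ) 1, y = α ^ 2 } = Set.Icc (0 : ℝ) 1 ∧
    { y : ℝ | ∃ β₁ ∈ Set.Icc (-1 : ℝ) 1, ∃ β₂ ∈ Set.Icc (-1 : ℝ) 1,
        y = (1 / 4) * (3 / 2 + (1 / 2) * β₁ + 2 * β₂) } = Set.Icc (-(1 / 4) : ℝ) 1 ∧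
    Set.Icc (0 : ℝ) 1 ⊂ Set.Icc (-(1 / 4) : ℝ) 1 := by
  refine ⟨?_, ?_, ?_⟩
  · ext y
    simp only [Set.mem_setOf_eq, Set.mem_Icc]
    constructor
    · rintro ⟨α, ⟨h1, h2⟩, rfl⟩
      constructor
      · positivity
      · nlinarith
    · rintro ⟨h0, h1⟩
      refine ⟨Real.sqrt y, ⟨?_, ?_⟩, ?_⟩
      · have := Real.sqrt_nonneg y; linarith
      · exact Real.sqrt_le_one.mpr h1
      · rw [Real.sq_sqrt h0]
  · ext y
    simp only [Set.mem_setOf_eq, Set.mem_Icc]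
    constructor
    · rintro ⟨β₁, ⟨a1, a2⟩, β₂, ⟨b1, b2⟩, rfl⟩
      constructor <;> nlinarith
    · rintro ⟨h0, h1⟩
      refine ⟨(8 * y - 3) / 5, ⟨by nlinarith, by nlinarith⟩, (8 * y - 3) / 5, ⟨by nlinarith, by nlinarith⟩, by ring⟩
  · constructor
    · intro x hx
      simp only [Set.mem_Icc] at *
      constructor <;> linarith [hx.1, hx.2]
    · intro h
      have := h (show (-(1/4) : ℝ) ∈ Set.Icc (-(1/4):ℝ) 1 by simp [Set.mem_Icc]; norm_num)
      simp [Set.mem_Icc] at this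
      linarith [this.1]
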